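/- If (X,Y) is a decomposition of a bull-free monogamous trigraph T, then the corresponding blocks T_X and T_Y are bull-free monogamous trigraphs. -/

import Mathlib

structure Trigraph (V : Type*) where
  θ : V → V → ℤ
  symm : ∀ u v, θ u v = θ v u
  range : ∀ u v, u ≠ v → θ u v = -1 ∨ θ u v = 0 ∨ θ u v = 1

namespace Trigraph

variable {V : Type*}

/-- `u` and `v` form a strong edge. -/
def SEdge (T : Trigraph V) (u v : V) : Prop := u ≠ v ∧ T.θ u v = 1

/-- `u` and `v` form a strong antiedge. -/
def SAnti (T : Trigraph V) (u v : V) : Prop := u ≠ v ∧ T.θ u v = -1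

/-- `u` and `v` form a switchable pair. -/
def Switch (T : Trigraph V) (u v : V) : Prop := u ≠ v ∧ T.θ u v = 0

/-- `u` and `v` are adjacent. -/
def Adj (T : Trigraph V) (u v : V) : Prop := u ≠ v ∧ (T.θ u v = 0 ∨ T.θ u v = 1)

/-- `u` and `v` are antiadjacent. -/
def Anti (T : Trigraph V) (u v : V) : Prop := u ≠ v ∧ (T.θ u v = -1 ∨ T.θ u v = 0)

instance [DecidableEq V] (T : Trigraph V) (u v : V) : Decidable (T.Adj u v) :=
  inferInstanceAs (Decidable (u ≠ v ∧ (T.θ u v = 0 ∨ T.θ u v = 1)))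

instance [DecidableEq V] (T : Trigraph V) (u v : V) : Decidable (T.Anti u v) :=
  inferInstanceAs (Decidable (u ≠ v ∧ (T.θ u v = -1 ∨ T.θ u v = 0)))

instance [DecidableEq V] (T : Trigraph V) (u v : V) : Decidable (T.Switch u v) :=
  inferInstanceAs (Decidable (u ≠ v ∧ T.θ u v = 0))

instance [DecidableEq V] (T : Trigraph V) (u v : V) : Decidable (T.SAnti u v) :=
  inferInstanceAs (Decidable (u ≠ v ∧ T.θ u v = -1))

/-- A trigraph is monogamous if every vertex is in at most one switchable pair. -/
def Monogamous (T : Trigraph V) : Prop :=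
  ∀ v u w : V, T.Switch v u → T.Switch v w → u = w

/-- The complement trigraph. -/
def compl (T : Trigraph V) : Trigraph V where
  θ := fun u v => -(T.θ u v)
  symm := fun u v => congrArg Neg.neg (T.symm u v)
  range := fun u v h => by
    have := T.range u v h
    try dsimp only
    omega

def IsBull (T : Trigraph V) (x1 x2 x3 y z : V) : Prop :=
  T.Adj x1 x2 ∧ T.Adj x1 x3 ∧ T.Adj x2 x3 ∧
  T.Adj y x1 ∧ T.Anti y x2 ∧ T.Anti y x3 ∧ T.Anti y z ∧
  T.Adj z x2 ∧ T.Anti z x1 ∧ T.Anti z x3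

def BullFree (T : Trigraph V) : Prop := ∀ x1 x2 x3 y z : V, ¬ T.IsBull x1 x2 x3 y z

/-- `S` is strongly complete to `A`. -/
def SComplete (T : Trigraph V) (S A : Set V) : Prop := ∀ s ∈ S, ∀ a ∈ A, T.SEdge s a

/-- `S` is strongly anticomplete to `A`. -/
def SAnticomplete (T : Trigraph V) (S A : Set V) : Prop := ∀ s ∈ S, ∀ a ∈ A, T.SAnti s a

/-- A homogeneous set. -/
def HomSet (T : Trigraph V) (X : Set V) : Prop :=
  1 < X.ncard ∧ X.ncard < Nat.card V ∧
  ∀ v ∉ X, (∀ a ∈ X, T.SEdge v a) ∨ (∀ a ∈ X, T.SAnti v a)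

/-- `(A,B,C,D,E,F)` is a split of the homogeneous pair `(A,B)`. -/
def IsSplit (T : Trigraph V) (A B C D E F : Set V) : Prop :=
  A.Nonempty ∧ B.Nonempty ∧ Disjoint A B ∧
  Disjoint C D ∧ Disjoint C E ∧ Disjoint C F ∧
  Disjoint D E ∧ Disjoint D F ∧ Disjoint E F ∧
  C ∪ D ∪ E ∪ F = (A ∪ B)ᶜ ∧
  T.SComplete A (C ∪ E) ∧ T.SAnticomplete A (D ∪ F) ∧
  T.SComplete B (D ∪ E) ∧ T.SAnticomplete B (C ∪ F) ∧
  ¬ T.SComplete A B ∧ ¬ T.SAnticomplete A B ∧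
  3 ≤ (A ∪ B).ncard ∧ 3 ≤ (C ∪ D ∪ E ∪ F).ncard

/-- `(A,B)` is a homogeneous pair. -/
def HomPair (T : Trigraph V) (A B : Set V) : Prop := ∃ C D E F, T.IsSplit A B C D E F

/-- A small homogeneous pair. -/
def SmallHomPair (T : Trigraph V) (A B : Set V) : Prop :=
  T.HomPair A B ∧ (A ∪ B).ncard ≤ 6

/-- A proper homogeneous pair. -/
def ProperHomPair (T : Trigraph V) (A B : Set V) : Prop :=
  ∃ C D E F, T.IsSplit A B C D E F ∧ C.Nonempty ∧ D.Nonempty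

/-- `(X, Xᶜ)` is a decomposition of `T`. -/
def Decomp (T : Trigraph V) (X : Set V) : Prop :=
  T.HomSet X ∨ ∃ A B, X = A ∪ B ∧ (T.SmallHomPair A B ∨ T.ProperHomPair A B)

/-- `(X, Xᶜ)` is a homogeneous cut of `T`. -/
def HomCut (T : Trigraph V) (X : Set V) : Prop :=
  T.HomSet X ∨ ∃ A B, X = A ∪ B ∧ T.ProperHomPair A B

/-- A minimally-sided homogeneous cut. -/
def MinSidedHomCut (T : Trigraph V) (X : Set V) : Prop :=
  T.HomCut X ∧ ∀ X' : Set V, T.HomCut X' → ¬ X' ⊂ X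

/-- The induced subtrigraph on `X`. -/
def induce (T : Trigraph V) (X : Set V) : Trigraph X where
  θ := fun u v => T.θ u v
  symm := fun u v => T.symm u v
  range := fun u v h => T.range u v (fun hh => h (Subtype.ext hh))

open Classical in
/-- The trigraph obtained from `T[X]` by adding two marker vertices joined by a switchable
pair, the first strongly complete to (the trace in `X` of) `P` and strongly anticomplete to
the rest of `X`, the second strongly complete to `Q` and strongly anticomplete to the rest. -/
noncomputable def augment2 (T : Trigraph V) (X P Q : Set V) : Trigraph (↥X ⊕ Fin 2) where
  θ := fun u v =>
    match u, v with
    | Sum.inl u, Sum.inl v => T.θ u v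
    | Sum.inl u, Sum.inr i => if (i = 0 ∧ (u : V) ∈ P) ∨ (i = 1 ∧ (u : V) ∈ Q) then 1 else -1
    | Sum.inr i, Sum.inl u => if (i = 0 ∧ (u : V) ∈ P) ∨ (i = 1 ∧ (u : V) ∈ Q) then 1 else -1
    | Sum.inr _, Sum.inr _ => 0
  symm := by
    rintro (u | i) (v | j)
    · exact T.symm u v
    · rfl
    · rfl
    · rfl
  range := by
    rintro (u | i) (v | j) h
    · exact T.range u v fun hh => h (by rw [Subtype.ext hh])
    · dsimp only; split <;> simp
    · dsimp only; split <;> simp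
    · simp

/-- The block of decomposition `T_X` for a proper homogeneous pair `(A,B)`:
`T[A ∪ B]` together with marker vertices `c` (strongly complete to `A`) and `d`
(strongly complete to `B`), with `cd` a switchable pair. -/
noncomputable def blockXPair (T : Trigraph V) (A B : Set V) : Trigraph (↥(A ∪ B) ⊕ Fin 2) :=
  T.augment2 (A ∪ B) A B

/-- The block of decomposition `T_Y` for a homogeneous pair `(A,B)` with split
`(A,B,C,D,E,F)` : `T[Y]` (where `Y = (A ∪ B)ᶜ`) together with marker vertices `a`
(strongly complete to `C ∪ E`) and `b` (strongly complete to `D ∪ E`), with `ab` a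
switchable pair. -/
noncomputable def blockYPair (T : Trigraph V) (A B C D E : Set V) : Trigraph (↥(A ∪ B)ᶜ ⊕ Fin 2) :=
  T.augment2 (A ∪ B)ᶜ (C ∪ E) (D ∪ E)


/-- A strong clique: vertices pairwise strongly adjacent. -/
def StrongClique (T : Trigraph V) (K : Set V) : Prop := K.Pairwise T.SEdge

/-- A strong stable set: vertices pairwise strongly antiadjacent. -/
def StrongStable (T : Trigraph V) (K : Set V) : Prop := K.Pairwise T.SAnti

/-- `T[X]` is triangle-free. -/
def TriangleFreeOn (T : Trigraph V) (X : Set V) : Prop :=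
  ∀ x ∈ X, ∀ y ∈ X, ∀ z ∈ X, ¬ (T.Adj x y ∧ T.Adj x z ∧ T.Adj y z)

/-- Membership in the basic class `𝒯₁`. -/
def InT1 (T : Trigraph V) : Prop :=
  T.Monogamous ∧ ∃ (X : Set V) (t : ℕ) (K : Fin t → Set V),
    (X ∪ ⋃ i, K i) = Set.univ ∧
    (∀ i, Disjoint X (K i)) ∧ (∀ i j, i ≠ j → Disjoint (K i) (K j)) ∧
    T.TriangleFreeOn X ∧ (∀ i, T.StrongClique (K i)) ∧
    (∀ i j, i ≠ j → T.SAnticomplete (K i) (K j)) ∧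
    (∀ i, ∀ v ∈ K i, ∃ A B : Set V,
      A ∪ B = {x ∈ X | T.Adj v x} ∧ Disjoint A B ∧
      T.StrongStable A ∧ T.StrongStable B ∧ T.SComplete A B)

/-- Membership in the basic class `𝒯₀`: monogamous trigraphs on at most 8 vertices. -/
def InT0 (T : Trigraph V) : Prop := T.Monogamous ∧ Nat.card V ≤ 8

/-- A basic trigraph: a member of `𝒯₀ ∪ 𝒯₁ ∪ 𝒯₁bar`. -/
def Basic (T : Trigraph V) : Prop := T.InT0 ∨ T.InT1 ∨ T.compl.InT1

/-- `h` lists the vertices of a hole of length `k` in `T`. -/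
def IsHole (T : Trigraph V) (k : ℕ) (h : Fin k → V) : Prop :=
  4 ≤ k ∧ Function.Injective h ∧ ∀ i j : Fin k,
    (((i.val + 1) % k = j.val ∨ (j.val + 1) % k = i.val) → T.Adj (h i) (h j)) ∧
    (i ≠ j → ¬ ((i.val + 1) % k = j.val ∨ (j.val + 1) % k = i.val) → T.Anti (h i) (h j))

def HasOddHole (T : Trigraph V) : Prop := ∃ k, Odd k ∧ ∃ h : Fin k → V, T.IsHole k h

/-- A Berge trigraph: no odd hole and no odd antihole. -/
def Berge (T : Trigraph V) : Prop := ¬ T.HasOddHole ∧ ¬ T.compl.HasOddHole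

/-- `(wv, we)` are legitimate weights for the trigraph `T`: `we` is symmetric and for every
switchable pair `uv` we have `max (wv u) (wv v) ≤ we u v ≤ wv u + wv v`. -/
def GoodWeights (T : Trigraph V) (wv : V → ℕ) (we : V → V → ℕ) : Prop :=
  (∀ u v, we u v = we v u) ∧
  ∀ u v, T.Switch u v → max (wv u) (wv v) ≤ we u v ∧ we u v ≤ wv u + wv v

/-- `S` is a stable set of `T`. -/
def StableF (T : Trigraph V) (S : Finset V) : Prop :=
  ∀ u ∈ S, ∀ v ∈ S, u ≠ v → T.Anti u v

open Classical in
/-- The weight of a stable set `S`: the sum of the weights of the vertices of `S` that are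
strongly antiadjacent to every other vertex of `S`, plus the sum of the weights of the
switchable pairs with both ends in `S`. -/
noncomputable def weightF (T : Trigraph V) (wv : V → ℕ) (we : V → V → ℕ) (S : Finset V) : ℕ :=
  (∑ v ∈ S.filter (fun v => ∀ u ∈ S, u ≠ v → T.SAnti u v), wv v)
    + (∑ u ∈ S, ∑ v ∈ S, if T.Switch u v then we u v else 0) / 2

open Classical in
/-- The maximum weight of a stable set of `T` contained in `X`. -/
noncomputable def alphaOn [Fintype V] (T : Trigraph V) (wv : V → ℕ) (we : V → V → ℕ)
    (X : Set V) : ℕ :=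
  (Finset.univ.powerset.filter fun S : Finset V => ↑S ⊆ X ∧ T.StableF S).sup (T.weightF wv we)

/-- The maximum weight of a stable set of `T`. -/
noncomputable def alphaW [Fintype V] (T : Trigraph V) (wv : V → ℕ) (we : V → V → ℕ) : ℕ :=
  T.alphaOn wv we Set.univ

open Classical in
/-- The trigraph `T_{a → S}` obtained from `T` by turning the switchable pair `ab` into a
strong edge and adding a new vertex `a' = none` strongly complete to `N(a) ∖ {b}` and
strongly anticomplete to everything else (including `a`). -/
noncomputable def expandS (T : Trigraph V) (a b : V) : Trigraph (Option V) where
  θ := fun u v =>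
    match u, v with
    | some u, some v => if (u = a ∧ v = b) ∨ (u = b ∧ v = a) then 1 else T.θ u v
    | some u, none => if T.Adj a u ∧ u ≠ b then 1 else -1
    | none, some v => if T.Adj a v ∧ v ≠ b then 1 else -1
    | none, none => -1
  symm := by
    rintro (_ | u) (_ | v)
    · rfl
    · rfl
    · rfl
    · dsimp only
      have hiff : ((u = a ∧ v = b) ∨ (u = b ∧ v = a)) ↔ ((v = a ∧ u = b) ∨ (v = b ∧ u = a)) := by
        tauto
      rw [if_congr hiff rfl (T.symm u v)]
  range := by
    rintro (_ | u) (_ | v) h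
    · exact absurd rfl h
    · dsimp only; split <;> simp
    · dsimp only; split <;> simp
    · dsimp only
      split
      · simp
      · exact T.range u v fun hh => h (by rw [hh])

open Classical in
/-- The trigraph `T_{a → K}`, defined like `T_{a → S}` except that the new vertex `a'` is in
addition strongly adjacent to `a`. -/
noncomputable def expandK (T : Trigraph V) (a b : V) : Trigraph (Option V) where
  θ := fun u v =>
    match u, v with
    | some u, some v => if (u = a ∧ v = b) ∨ (u = b ∧ v = a) then 1 else T.θ u v
    | some u, none => if (T.Adj a u ∧ u ≠ b) ∨ u = a then 1 else -1
    | none, some v => if (T.Adj a v ∧ v ≠ b) ∨ v = a then 1 else -1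
    | none, none => -1
  symm := by
    rintro (_ | u) (_ | v)
    · rfl
    · rfl
    · rfl
    · dsimp only
      have hiff : ((u = a ∧ v = b) ∨ (u = b ∧ v = a)) ↔ ((v = a ∧ u = b) ∨ (v = b ∧ u = a)) := by
        tauto
      rw [if_congr hiff rfl (T.symm u v)]
  range := by
    rintro (_ | u) (_ | v) h
    · exact absurd rfl h
    · dsimp only; split <;> simp
    · dsimp only; split <;> simp
    · dsimp only
      split
      · simp
      · exact T.range u v fun hh => h (by rw [hh])

/-- Vertex weights for `T_{a → S}`. -/
def wvS (wv : V → ℕ) (we : V → V → ℕ) (a b : V) [DecidableEq V] : Option V → ℕ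
  | some v => if v = a then wv a + wv b - we a b else wv v
  | none => we a b - wv b

/-- Vertex weights for `T_{a → K}`. -/
def wvK (wv : V → ℕ) (we : V → V → ℕ) (a b : V) : Option V → ℕ
  | some v => wv v
  | none => we a b - wv b

/-- Switchable-pair weights for `T_{a → S}` and `T_{a → K}`. -/
def weO (we : V → V → ℕ) : Option V → Option V → ℕ
  | some u, some v => we u v
  | _, _ => 0

end Trigraph

namespace Trigraph

variable {V : Type*} {T : Trigraph V} {X P Q : Set V}

lemma Adj.symm {u v : V} (h : T.Adj u v) : T.Adj v u :=
  ⟨h.1.symm, by rw [T.symm v u]; exact h.2⟩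

lemma Anti.symm {u v : V} (h : T.Anti u v) : T.Anti v u :=
  ⟨h.1.symm, by rw [T.symm v u]; exact h.2⟩

lemma Switch.symm {u v : V} (h : T.Switch u v) : T.Switch v u :=
  ⟨h.1.symm, by rw [T.symm v u]; exact h.2⟩

lemma induce_adj {u v : X} (h : (T.induce X).Adj u v) : T.Adj ↑u ↑v :=
  ⟨Subtype.coe_ne_coe.mpr h.1, h.2⟩

lemma induce_anti {u v : X} (h : (T.induce X).Anti u v) : T.Anti ↑u ↑v :=
  ⟨Subtype.coe_ne_coe.mpr h.1, h.2⟩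

lemma induce_switch {u v : X} (h : (T.induce X).Switch u v) : T.Switch ↑u ↑v :=
  ⟨Subtype.coe_ne_coe.mpr h.1, h.2⟩

lemma BullFree.induce (hbf : T.BullFree) (X : Set V) : (T.induce X).BullFree := by
  rintro a b c d e ⟨h1, h2, h3, h4, h5, h6, h7, h8, h9, h10⟩
  exact hbf ↑a ↑b ↑c ↑d ↑e ⟨induce_adj h1, induce_adj h2, induce_adj h3, induce_adj h4,
    induce_anti h5, induce_anti h6, induce_anti h7, induce_adj h8, induce_anti h9,
    induce_anti h10⟩

lemma Monogamous.induce (hm : T.Monogamous) (X : Set V) : (T.induce X).Monogamous := by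
  intro v u w h1 h2
  exact Subtype.ext (hm ↑v ↑u ↑w (induce_switch h1) (induce_switch h2))

lemma fin_two : ∀ i : Fin 2, i = 0 ∨ i = 1 := by decide

lemma fin2_pigeon : ∀ {i j k : Fin 2}, i ≠ j → i ≠ k → j ≠ k → False := by decide

lemma fin2_eq_of_ne : ∀ {i j k : Fin 2}, i ≠ j → i ≠ k → j = k := by decide

open Classical in
lemma aug_θ_inl_inr (u : X) (i : Fin 2) :
    (T.augment2 X P Q).θ (.inl u) (.inr i) =
      if (i = 0 ∧ (u : V) ∈ P) ∨ (i = 1 ∧ (u : V) ∈ Q) then 1 else -1 := rfl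

lemma aug_adj_inl {u v : X} (h : (T.augment2 X P Q).Adj (.inl u) (.inl v)) : T.Adj ↑u ↑v :=
  ⟨fun e => h.1 (congrArg Sum.inl (Subtype.ext e)), h.2⟩

lemma aug_anti_inl {u v : X} (h : (T.augment2 X P Q).Anti (.inl u) (.inl v)) : T.Anti ↑u ↑v :=
  ⟨fun e => h.1 (congrArg Sum.inl (Subtype.ext e)), h.2⟩

lemma aug_switch_inl {u v : X} (h : (T.augment2 X P Q).Switch (.inl u) (.inl v)) :
    T.Switch ↑u ↑v :=
  ⟨fun e => h.1 (congrArg Sum.inl (Subtype.ext e)), h.2⟩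

lemma aug_cond_of_adj {u : X} {i : Fin 2} (h : (T.augment2 X P Q).Adj (.inl u) (.inr i)) :
    (i = 0 ∧ (u : V) ∈ P) ∨ (i = 1 ∧ (u : V) ∈ Q) := by
  rcases h with ⟨-, h⟩
  rw [aug_θ_inl_inr] at h
  by_contra hc
  rw [if_neg hc] at h
  rcases h with h | h <;> exact absurd h (by norm_num)

lemma aug_cond_of_anti {u : X} {i : Fin 2} (h : (T.augment2 X P Q).Anti (.inl u) (.inr i)) :
    ¬ ((i = 0 ∧ (u : V) ∈ P) ∨ (i = 1 ∧ (u : V) ∈ Q)) := by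
  rcases h with ⟨-, h⟩
  rw [aug_θ_inl_inr] at h
  intro hc
  rw [if_pos hc] at h
  rcases h with h | h <;> exact absurd h (by norm_num)

lemma memP_of_adj_snd {u : X} (h : (T.augment2 X P Q).Adj (.inl u) (.inr 0)) : (u : V) ∈ P := by
  rcases aug_cond_of_adj h with ⟨-, h⟩ | ⟨h0, -⟩
  · exact h
  · exact absurd h0 (by decide)

lemma memQ_of_adj_snd {u : X} (h : (T.augment2 X P Q).Adj (.inl u) (.inr 1)) : (u : V) ∈ Q := by
  rcases aug_cond_of_adj h with ⟨h0, -⟩ | ⟨-, h⟩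
  · exact absurd h0 (by decide)
  · exact h

lemma memP_of_adj_fst {u : X} (h : (T.augment2 X P Q).Adj (.inr 0) (.inl u)) : (u : V) ∈ P :=
  memP_of_adj_snd h.symm

lemma memQ_of_adj_fst {u : X} (h : (T.augment2 X P Q).Adj (.inr 1) (.inl u)) : (u : V) ∈ Q :=
  memQ_of_adj_snd h.symm

lemma nmemP_of_anti_snd {u : X} (h : (T.augment2 X P Q).Anti (.inl u) (.inr 0)) :
    (u : V) ∉ P := fun hm => aug_cond_of_anti h (Or.inl ⟨rfl, hm⟩)

lemma nmemQ_of_anti_snd {u : X} (h : (T.augment2 X P Q).Anti (.inl u) (.inr 1)) :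
    (u : V) ∉ Q := fun hm => aug_cond_of_anti h (Or.inr ⟨rfl, hm⟩)

lemma nmemP_of_anti_fst {u : X} (h : (T.augment2 X P Q).Anti (.inr 0) (.inl u)) :
    (u : V) ∉ P := nmemP_of_anti_snd h.symm

lemma nmemQ_of_anti_fst {u : X} (h : (T.augment2 X P Q).Anti (.inr 1) (.inl u)) :
    (u : V) ∉ Q := nmemQ_of_anti_snd h.symm

lemma ne_of_adj_inr {i j : Fin 2} (h : (T.augment2 X P Q).Adj (.inr i) (.inr j)) : i ≠ j :=
  fun e => h.1 (congrArg Sum.inr e)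

lemma ne_of_anti_inr {i j : Fin 2} (h : (T.augment2 X P Q).Anti (.inr i) (.inr j)) : i ≠ j :=
  fun e => h.1 (congrArg Sum.inr e)

lemma aug_no_switch_inl_inr {u : X} {i : Fin 2}
    (h : (T.augment2 X P Q).Switch (.inl u) (.inr i)) : False := by
  have h2 := h.2
  rw [aug_θ_inl_inr] at h2
  split_ifs at h2 <;> exact absurd h2 (by norm_num)

lemma augment2_monogamous (hm : T.Monogamous) : (T.augment2 X P Q).Monogamous := by
  rintro (v | i) (u | j) (w | k) h1 h2
  · exact congrArg Sum.inl (Subtype.ext (hm ↑v ↑u ↑w (aug_switch_inl h1) (aug_switch_inl h2)))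
  · exact (aug_no_switch_inl_inr h2).elim
  · exact (aug_no_switch_inl_inr h1).elim
  · exact (aug_no_switch_inl_inr h1).elim
  · exact (aug_no_switch_inl_inr h1.symm).elim
  · exact (aug_no_switch_inl_inr h1.symm).elim
  · exact (aug_no_switch_inl_inr h2.symm).elim
  · exact congrArg Sum.inr (fin2_eq_of_ne
      (fun e => h1.1 (congrArg Sum.inr e)) (fun e => h2.1 (congrArg Sum.inr e)))

/-- `w` behaves, towards `X`, exactly like the marker with adjacency set `S`. -/
def Mimics (T : Trigraph V) (X S : Set V) (w : V) : Prop :=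
  w ∉ X ∧ ∀ u : X, ((u : V) ∈ S → T.θ w u = 1) ∧ ((u : V) ∉ S → T.θ w u = -1)

lemma Mimics.ne {S : Set V} {w : V} (h : Mimics T X S w) (u : X) : w ≠ ↑u :=
  fun e => h.1 (by rw [e]; exact u.2)

lemma Mimics.adj {S : Set V} {w : V} (h : Mimics T X S w) (u : X) (hu : (u : V) ∈ S) :
    T.Adj w ↑u := ⟨h.ne u, Or.inr ((h.2 u).1 hu)⟩

lemma Mimics.adj' {S : Set V} {w : V} (h : Mimics T X S w) (u : X) (hu : (u : V) ∈ S) :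
    T.Adj ↑u w := (h.adj u hu).symm

lemma Mimics.anti {S : Set V} {w : V} (h : Mimics T X S w) (u : X) (hu : (u : V) ∉ S) :
    T.Anti w ↑u := ⟨h.ne u, Or.inl ((h.2 u).2 hu)⟩

lemma Mimics.anti' {S : Set V} {w : V} (h : Mimics T X S w) (u : X) (hu : (u : V) ∉ S) :
    T.Anti ↑u w := (h.anti u hu).symm

end Trigraph
namespace Trigraph

variable {V : Type*} {T : Trigraph V} {X P Q : Set V}

lemma augment2_bullFree (hbf : T.BullFree) (p q : V)
    (hp : Mimics T X P p) (hq : Mimics T X Q q)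
    (H : (∀ u ∈ X, u ∈ P ↔ u ∉ Q) ∨
      ((∃ a b, Mimics T X P a ∧ Mimics T X Q b ∧ T.Adj a b) ∧
       (∃ a b, Mimics T X P a ∧ Mimics T X Q b ∧ T.Anti a b))) :
    (T.augment2 X P Q).BullFree := by
  rintro (u1 | i1) (u2 | i2) (u3 | i3) (u4 | i4) (u5 | i5)
    ⟨h1, h2, h3, h4, h5, h6, h7, h8, h9, h10⟩
  -- markers at positions []
  · exact hbf (↑u1 : V) (↑u2 : V) (↑u3 : V) (↑u4 : V) (↑u5 : V)
      ⟨
        aug_adj_inl h1,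
        aug_adj_inl h2,
        aug_adj_inl h3,
        aug_adj_inl h4,
        aug_anti_inl h5,
        aug_anti_inl h6,
        aug_anti_inl h7,
        aug_adj_inl h8,
        aug_anti_inl h9,
        aug_anti_inl h10⟩
  -- markers at positions [5]
  · rcases fin_two i5 with rfl | rfl
    · exact hbf (↑u1 : V) (↑u2 : V) (↑u3 : V) (↑u4 : V) p
        ⟨
          aug_adj_inl h1,
          aug_adj_inl h2,
          aug_adj_inl h3,
          aug_adj_inl h4,
          aug_anti_inl h5,
          aug_anti_inl h6,
          hp.anti' u4 (nmemP_of_anti_snd h7),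
          hp.adj u2 (memP_of_adj_fst h8),
          hp.anti u1 (nmemP_of_anti_fst h9),
          hp.anti u3 (nmemP_of_anti_fst h10)⟩
    · exact hbf (↑u1 : V) (↑u2 : V) (↑u3 : V) (↑u4 : V) q
        ⟨
          aug_adj_inl h1,
          aug_adj_inl h2,
          aug_adj_inl h3,
          aug_adj_inl h4,
          aug_anti_inl h5,
          aug_anti_inl h6,
          hq.anti' u4 (nmemQ_of_anti_snd h7),
          hq.adj u2 (memQ_of_adj_fst h8),
          hq.anti u1 (nmemQ_of_anti_fst h9),
          hq.anti u3 (nmemQ_of_anti_fst h10)⟩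
  -- markers at positions [4]
  · rcases fin_two i4 with rfl | rfl
    · exact hbf (↑u1 : V) (↑u2 : V) (↑u3 : V) p (↑u5 : V)
        ⟨
          aug_adj_inl h1,
          aug_adj_inl h2,
          aug_adj_inl h3,
          hp.adj u1 (memP_of_adj_fst h4),
          hp.anti u2 (nmemP_of_anti_fst h5),
          hp.anti u3 (nmemP_of_anti_fst h6),
          hp.anti u5 (nmemP_of_anti_fst h7),
          aug_adj_inl h8,
          aug_anti_inl h9,
          aug_anti_inl h10⟩
    · exact hbf (↑u1 : V) (↑u2 : V) (↑u3 : V) q (↑u5 : V)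
        ⟨
          aug_adj_inl h1,
          aug_adj_inl h2,
          aug_adj_inl h3,
          hq.adj u1 (memQ_of_adj_fst h4),
          hq.anti u2 (nmemQ_of_anti_fst h5),
          hq.anti u3 (nmemQ_of_anti_fst h6),
          hq.anti u5 (nmemQ_of_anti_fst h7),
          aug_adj_inl h8,
          aug_anti_inl h9,
          aug_anti_inl h10⟩
  -- markers at positions [4, 5]
  · rcases fin_two i4 with rfl | rfl
    · rcases fin_two i5 with rfl | rfl
      · exact ne_of_anti_inr h7 rfl
      · rcases H with Hpart | ⟨⟨pa, qa, hpa, hqa, hrel⟩, ⟨pb, qb, hpb, hqb, hrel'⟩⟩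
        · have mh4 := memP_of_adj_fst h4
          have mh5 := nmemP_of_anti_fst h5
          have mh6 := nmemP_of_anti_fst h6
          have mh8 := memQ_of_adj_fst h8
          have mh9 := nmemQ_of_anti_fst h9
          have mh10 := nmemQ_of_anti_fst h10
          have hc1 := Hpart ↑u1 u1.2
          have hc2 := Hpart ↑u2 u2.2
          have hc3 := Hpart ↑u3 u3.2
          tauto
        · exact hbf (↑u1 : V) (↑u2 : V) (↑u3 : V) pb qb
            ⟨
              aug_adj_inl h1,
              aug_adj_inl h2,
              aug_adj_inl h3,
              hpb.adj u1 (memP_of_adj_fst h4),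
              hpb.anti u2 (nmemP_of_anti_fst h5),
              hpb.anti u3 (nmemP_of_anti_fst h6),
              hrel',
              hqb.adj u2 (memQ_of_adj_fst h8),
              hqb.anti u1 (nmemQ_of_anti_fst h9),
              hqb.anti u3 (nmemQ_of_anti_fst h10)⟩
    · rcases fin_two i5 with rfl | rfl
      · rcases H with Hpart | ⟨⟨pa, qa, hpa, hqa, hrel⟩, ⟨pb, qb, hpb, hqb, hrel'⟩⟩
        · have mh4 := memQ_of_adj_fst h4
          have mh5 := nmemQ_of_anti_fst h5
          have mh6 := nmemQ_of_anti_fst h6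
          have mh8 := memP_of_adj_fst h8
          have mh9 := nmemP_of_anti_fst h9
          have mh10 := nmemP_of_anti_fst h10
          have hc1 := Hpart ↑u1 u1.2
          have hc2 := Hpart ↑u2 u2.2
          have hc3 := Hpart ↑u3 u3.2
          tauto
        · exact hbf (↑u1 : V) (↑u2 : V) (↑u3 : V) qb pb
            ⟨
              aug_adj_inl h1,
              aug_adj_inl h2,
              aug_adj_inl h3,
              hqb.adj u1 (memQ_of_adj_fst h4),
              hqb.anti u2 (nmemQ_of_anti_fst h5),
              hqb.anti u3 (nmemQ_of_anti_fst h6),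
              hrel'.symm,
              hpb.adj u2 (memP_of_adj_fst h8),
              hpb.anti u1 (nmemP_of_anti_fst h9),
              hpb.anti u3 (nmemP_of_anti_fst h10)⟩
      · exact ne_of_anti_inr h7 rfl
  -- markers at positions [3]
  · rcases fin_two i3 with rfl | rfl
    · exact hbf (↑u1 : V) (↑u2 : V) p (↑u4 : V) (↑u5 : V)
        ⟨
          aug_adj_inl h1,
          hp.adj' u1 (memP_of_adj_snd h2),
          hp.adj' u2 (memP_of_adj_snd h3),
          aug_adj_inl h4,
          aug_anti_inl h5,
          hp.anti' u4 (nmemP_of_anti_snd h6),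
          aug_anti_inl h7,
          aug_adj_inl h8,
          aug_anti_inl h9,
          hp.anti' u5 (nmemP_of_anti_snd h10)⟩
    · exact hbf (↑u1 : V) (↑u2 : V) q (↑u4 : V) (↑u5 : V)
        ⟨
          aug_adj_inl h1,
          hq.adj' u1 (memQ_of_adj_snd h2),
          hq.adj' u2 (memQ_of_adj_snd h3),
          aug_adj_inl h4,
          aug_anti_inl h5,
          hq.anti' u4 (nmemQ_of_anti_snd h6),
          aug_anti_inl h7,
          aug_adj_inl h8,
          aug_anti_inl h9,
          hq.anti' u5 (nmemQ_of_anti_snd h10)⟩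
  -- markers at positions [3, 5]
  · rcases fin_two i3 with rfl | rfl
    · rcases fin_two i5 with rfl | rfl
      · exact ne_of_anti_inr h10 rfl
      · rcases H with Hpart | ⟨⟨pa, qa, hpa, hqa, hrel⟩, ⟨pb, qb, hpb, hqb, hrel'⟩⟩
        · have mh2 := memP_of_adj_snd h2
          have mh3 := memP_of_adj_snd h3
          have mh6 := nmemP_of_anti_snd h6
          have mh7 := nmemQ_of_anti_snd h7
          have mh8 := memQ_of_adj_fst h8
          have mh9 := nmemQ_of_anti_fst h9
          have hc1 := Hpart ↑u1 u1.2
          have hc2 := Hpart ↑u2 u2.2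
          have hc4 := Hpart ↑u4 u4.2
          tauto
        · exact hbf (↑u1 : V) (↑u2 : V) pb (↑u4 : V) qb
            ⟨
              aug_adj_inl h1,
              hpb.adj' u1 (memP_of_adj_snd h2),
              hpb.adj' u2 (memP_of_adj_snd h3),
              aug_adj_inl h4,
              aug_anti_inl h5,
              hpb.anti' u4 (nmemP_of_anti_snd h6),
              hqb.anti' u4 (nmemQ_of_anti_snd h7),
              hqb.adj u2 (memQ_of_adj_fst h8),
              hqb.anti u1 (nmemQ_of_anti_fst h9),
              hrel'.symm⟩
    · rcases fin_two i5 with rfl | rfl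
      · rcases H with Hpart | ⟨⟨pa, qa, hpa, hqa, hrel⟩, ⟨pb, qb, hpb, hqb, hrel'⟩⟩
        · have mh2 := memQ_of_adj_snd h2
          have mh3 := memQ_of_adj_snd h3
          have mh6 := nmemQ_of_anti_snd h6
          have mh7 := nmemP_of_anti_snd h7
          have mh8 := memP_of_adj_fst h8
          have mh9 := nmemP_of_anti_fst h9
          have hc1 := Hpart ↑u1 u1.2
          have hc2 := Hpart ↑u2 u2.2
          have hc4 := Hpart ↑u4 u4.2
          tauto
        · exact hbf (↑u1 : V) (↑u2 : V) qb (↑u4 : V) pb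
            ⟨
              aug_adj_inl h1,
              hqb.adj' u1 (memQ_of_adj_snd h2),
              hqb.adj' u2 (memQ_of_adj_snd h3),
              aug_adj_inl h4,
              aug_anti_inl h5,
              hqb.anti' u4 (nmemQ_of_anti_snd h6),
              hpb.anti' u4 (nmemP_of_anti_snd h7),
              hpb.adj u2 (memP_of_adj_fst h8),
              hpb.anti u1 (nmemP_of_anti_fst h9),
              hrel'⟩
      · exact ne_of_anti_inr h10 rfl
  -- markers at positions [3, 4]
  · rcases fin_two i3 with rfl | rfl
    · rcases fin_two i4 with rfl | rfl
      · exact ne_of_anti_inr h6 rfl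
      · rcases H with Hpart | ⟨⟨pa, qa, hpa, hqa, hrel⟩, ⟨pb, qb, hpb, hqb, hrel'⟩⟩
        · have mh2 := memP_of_adj_snd h2
          have mh3 := memP_of_adj_snd h3
          have mh4 := memQ_of_adj_fst h4
          have mh5 := nmemQ_of_anti_fst h5
          have mh7 := nmemQ_of_anti_fst h7
          have mh10 := nmemP_of_anti_snd h10
          have hc1 := Hpart ↑u1 u1.2
          have hc2 := Hpart ↑u2 u2.2
          have hc5 := Hpart ↑u5 u5.2
          tauto
        · exact hbf (↑u1 : V) (↑u2 : V) pb qb (↑u5 : V)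
            ⟨
              aug_adj_inl h1,
              hpb.adj' u1 (memP_of_adj_snd h2),
              hpb.adj' u2 (memP_of_adj_snd h3),
              hqb.adj u1 (memQ_of_adj_fst h4),
              hqb.anti u2 (nmemQ_of_anti_fst h5),
              hrel'.symm,
              hqb.anti u5 (nmemQ_of_anti_fst h7),
              aug_adj_inl h8,
              aug_anti_inl h9,
              hpb.anti' u5 (nmemP_of_anti_snd h10)⟩
    · rcases fin_two i4 with rfl | rfl
      · rcases H with Hpart | ⟨⟨pa, qa, hpa, hqa, hrel⟩, ⟨pb, qb, hpb, hqb, hrel'⟩⟩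
        · have mh2 := memQ_of_adj_snd h2
          have mh3 := memQ_of_adj_snd h3
          have mh4 := memP_of_adj_fst h4
          have mh5 := nmemP_of_anti_fst h5
          have mh7 := nmemP_of_anti_fst h7
          have mh10 := nmemQ_of_anti_snd h10
          have hc1 := Hpart ↑u1 u1.2
          have hc2 := Hpart ↑u2 u2.2
          have hc5 := Hpart ↑u5 u5.2
          tauto
        · exact hbf (↑u1 : V) (↑u2 : V) qb pb (↑u5 : V)
            ⟨
              aug_adj_inl h1,
              hqb.adj' u1 (memQ_of_adj_snd h2),
              hqb.adj' u2 (memQ_of_adj_snd h3),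
              hpb.adj u1 (memP_of_adj_fst h4),
              hpb.anti u2 (nmemP_of_anti_fst h5),
              hrel',
              hpb.anti u5 (nmemP_of_anti_fst h7),
              aug_adj_inl h8,
              aug_anti_inl h9,
              hqb.anti' u5 (nmemQ_of_anti_snd h10)⟩
      · exact ne_of_anti_inr h6 rfl
  -- markers at positions [3, 4, 5]
  · exact fin2_pigeon ((ne_of_anti_inr h6).symm) ((ne_of_anti_inr h10).symm) (ne_of_anti_inr h7)
  -- markers at positions [2]
  · rcases fin_two i2 with rfl | rfl
    · exact hbf (↑u1 : V) p (↑u3 : V) (↑u4 : V) (↑u5 : V)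
        ⟨
          hp.adj' u1 (memP_of_adj_snd h1),
          aug_adj_inl h2,
          hp.adj u3 (memP_of_adj_fst h3),
          aug_adj_inl h4,
          hp.anti' u4 (nmemP_of_anti_snd h5),
          aug_anti_inl h6,
          aug_anti_inl h7,
          hp.adj' u5 (memP_of_adj_snd h8),
          aug_anti_inl h9,
          aug_anti_inl h10⟩
    · exact hbf (↑u1 : V) q (↑u3 : V) (↑u4 : V) (↑u5 : V)
        ⟨
          hq.adj' u1 (memQ_of_adj_snd h1),
          aug_adj_inl h2,
          hq.adj u3 (memQ_of_adj_fst h3),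
          aug_adj_inl h4,
          hq.anti' u4 (nmemQ_of_anti_snd h5),
          aug_anti_inl h6,
          aug_anti_inl h7,
          hq.adj' u5 (memQ_of_adj_snd h8),
          aug_anti_inl h9,
          aug_anti_inl h10⟩
  -- markers at positions [2, 5]
  · rcases fin_two i2 with rfl | rfl
    · rcases fin_two i5 with rfl | rfl
      · exact ne_of_adj_inr h8 rfl
      · rcases H with Hpart | ⟨⟨pa, qa, hpa, hqa, hrel⟩, ⟨pb, qb, hpb, hqb, hrel'⟩⟩
        · have mh1 := memP_of_adj_snd h1
          have mh3 := memP_of_adj_fst h3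
          have mh5 := nmemP_of_anti_snd h5
          have mh7 := nmemQ_of_anti_snd h7
          have mh9 := nmemQ_of_anti_fst h9
          have mh10 := nmemQ_of_anti_fst h10
          have hc1 := Hpart ↑u1 u1.2
          have hc3 := Hpart ↑u3 u3.2
          have hc4 := Hpart ↑u4 u4.2
          tauto
        · exact hbf (↑u1 : V) pa (↑u3 : V) (↑u4 : V) qa
            ⟨
              hpa.adj' u1 (memP_of_adj_snd h1),
              aug_adj_inl h2,
              hpa.adj u3 (memP_of_adj_fst h3),
              aug_adj_inl h4,
              hpa.anti' u4 (nmemP_of_anti_snd h5),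
              aug_anti_inl h6,
              hqa.anti' u4 (nmemQ_of_anti_snd h7),
              hrel.symm,
              hqa.anti u1 (nmemQ_of_anti_fst h9),
              hqa.anti u3 (nmemQ_of_anti_fst h10)⟩
    · rcases fin_two i5 with rfl | rfl
      · rcases H with Hpart | ⟨⟨pa, qa, hpa, hqa, hrel⟩, ⟨pb, qb, hpb, hqb, hrel'⟩⟩
        · have mh1 := memQ_of_adj_snd h1
          have mh3 := memQ_of_adj_fst h3
          have mh5 := nmemQ_of_anti_snd h5
          have mh7 := nmemP_of_anti_snd h7
          have mh9 := nmemP_of_anti_fst h9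
          have mh10 := nmemP_of_anti_fst h10
          have hc1 := Hpart ↑u1 u1.2
          have hc3 := Hpart ↑u3 u3.2
          have hc4 := Hpart ↑u4 u4.2
          tauto
        · exact hbf (↑u1 : V) qa (↑u3 : V) (↑u4 : V) pa
            ⟨
              hqa.adj' u1 (memQ_of_adj_snd h1),
              aug_adj_inl h2,
              hqa.adj u3 (memQ_of_adj_fst h3),
              aug_adj_inl h4,
              hqa.anti' u4 (nmemQ_of_anti_snd h5),
              aug_anti_inl h6,
              hpa.anti' u4 (nmemP_of_anti_snd h7),
              hrel,
              hpa.anti u1 (nmemP_of_anti_fst h9),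
              hpa.anti u3 (nmemP_of_anti_fst h10)⟩
      · exact ne_of_adj_inr h8 rfl
  -- markers at positions [2, 4]
  · rcases fin_two i2 with rfl | rfl
    · rcases fin_two i4 with rfl | rfl
      · exact ne_of_anti_inr h5 rfl
      · rcases H with Hpart | ⟨⟨pa, qa, hpa, hqa, hrel⟩, ⟨pb, qb, hpb, hqb, hrel'⟩⟩
        · have mh1 := memP_of_adj_snd h1
          have mh3 := memP_of_adj_fst h3
          have mh4 := memQ_of_adj_fst h4
          have mh6 := nmemQ_of_anti_fst h6
          have mh7 := nmemQ_of_anti_fst h7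
          have mh8 := memP_of_adj_snd h8
          have hc1 := Hpart ↑u1 u1.2
          have hc3 := Hpart ↑u3 u3.2
          have hc5 := Hpart ↑u5 u5.2
          tauto
        · exact hbf (↑u1 : V) pb (↑u3 : V) qb (↑u5 : V)
            ⟨
              hpb.adj' u1 (memP_of_adj_snd h1),
              aug_adj_inl h2,
              hpb.adj u3 (memP_of_adj_fst h3),
              hqb.adj u1 (memQ_of_adj_fst h4),
              hrel'.symm,
              hqb.anti u3 (nmemQ_of_anti_fst h6),
              hqb.anti u5 (nmemQ_of_anti_fst h7),
              hpb.adj' u5 (memP_of_adj_snd h8),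
              aug_anti_inl h9,
              aug_anti_inl h10⟩
    · rcases fin_two i4 with rfl | rfl
      · rcases H with Hpart | ⟨⟨pa, qa, hpa, hqa, hrel⟩, ⟨pb, qb, hpb, hqb, hrel'⟩⟩
        · have mh1 := memQ_of_adj_snd h1
          have mh3 := memQ_of_adj_fst h3
          have mh4 := memP_of_adj_fst h4
          have mh6 := nmemP_of_anti_fst h6
          have mh7 := nmemP_of_anti_fst h7
          have mh8 := memQ_of_adj_snd h8
          have hc1 := Hpart ↑u1 u1.2
          have hc3 := Hpart ↑u3 u3.2
          have hc5 := Hpart ↑u5 u5.2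
          tauto
        · exact hbf (↑u1 : V) qb (↑u3 : V) pb (↑u5 : V)
            ⟨
              hqb.adj' u1 (memQ_of_adj_snd h1),
              aug_adj_inl h2,
              hqb.adj u3 (memQ_of_adj_fst h3),
              hpb.adj u1 (memP_of_adj_fst h4),
              hrel',
              hpb.anti u3 (nmemP_of_anti_fst h6),
              hpb.anti u5 (nmemP_of_anti_fst h7),
              hqb.adj' u5 (memQ_of_adj_snd h8),
              aug_anti_inl h9,
              aug_anti_inl h10⟩
      · exact ne_of_anti_inr h5 rfl
  -- markers at positions [2, 4, 5]
  · exact fin2_pigeon ((ne_of_anti_inr h5).symm) ((ne_of_adj_inr h8).symm) (ne_of_anti_inr h7)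
  -- markers at positions [2, 3]
  · rcases fin_two i2 with rfl | rfl
    · rcases fin_two i3 with rfl | rfl
      · exact ne_of_adj_inr h3 rfl
      · rcases H with Hpart | ⟨⟨pa, qa, hpa, hqa, hrel⟩, ⟨pb, qb, hpb, hqb, hrel'⟩⟩
        · have mh1 := memP_of_adj_snd h1
          have mh2 := memQ_of_adj_snd h2
          have mh5 := nmemP_of_anti_snd h5
          have mh6 := nmemQ_of_anti_snd h6
          have mh8 := memP_of_adj_snd h8
          have mh10 := nmemQ_of_anti_snd h10
          have hc1 := Hpart ↑u1 u1.2
          have hc4 := Hpart ↑u4 u4.2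
          have hc5 := Hpart ↑u5 u5.2
          tauto
        · exact hbf (↑u1 : V) pa qa (↑u4 : V) (↑u5 : V)
            ⟨
              hpa.adj' u1 (memP_of_adj_snd h1),
              hqa.adj' u1 (memQ_of_adj_snd h2),
              hrel,
              aug_adj_inl h4,
              hpa.anti' u4 (nmemP_of_anti_snd h5),
              hqa.anti' u4 (nmemQ_of_anti_snd h6),
              aug_anti_inl h7,
              hpa.adj' u5 (memP_of_adj_snd h8),
              aug_anti_inl h9,
              hqa.anti' u5 (nmemQ_of_anti_snd h10)⟩
    · rcases fin_two i3 with rfl | rfl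
      · rcases H with Hpart | ⟨⟨pa, qa, hpa, hqa, hrel⟩, ⟨pb, qb, hpb, hqb, hrel'⟩⟩
        · have mh1 := memQ_of_adj_snd h1
          have mh2 := memP_of_adj_snd h2
          have mh5 := nmemQ_of_anti_snd h5
          have mh6 := nmemP_of_anti_snd h6
          have mh8 := memQ_of_adj_snd h8
          have mh10 := nmemP_of_anti_snd h10
          have hc1 := Hpart ↑u1 u1.2
          have hc4 := Hpart ↑u4 u4.2
          have hc5 := Hpart ↑u5 u5.2
          tauto
        · exact hbf (↑u1 : V) qa pa (↑u4 : V) (↑u5 : V)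
            ⟨
              hqa.adj' u1 (memQ_of_adj_snd h1),
              hpa.adj' u1 (memP_of_adj_snd h2),
              hrel.symm,
              aug_adj_inl h4,
              hqa.anti' u4 (nmemQ_of_anti_snd h5),
              hpa.anti' u4 (nmemP_of_anti_snd h6),
              aug_anti_inl h7,
              hqa.adj' u5 (memQ_of_adj_snd h8),
              aug_anti_inl h9,
              hpa.anti' u5 (nmemP_of_anti_snd h10)⟩
      · exact ne_of_adj_inr h3 rfl
  -- markers at positions [2, 3, 5]
  · exact fin2_pigeon (ne_of_adj_inr h3) ((ne_of_adj_inr h8).symm) ((ne_of_anti_inr h10).symm)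
  -- markers at positions [2, 3, 4]
  · exact fin2_pigeon (ne_of_adj_inr h3) ((ne_of_anti_inr h5).symm) ((ne_of_anti_inr h6).symm)
  -- markers at positions [2, 3, 4, 5]
  · exact fin2_pigeon (ne_of_adj_inr h3) ((ne_of_anti_inr h5).symm) ((ne_of_anti_inr h6).symm)
  -- markers at positions [1]
  · rcases fin_two i1 with rfl | rfl
    · exact hbf p (↑u2 : V) (↑u3 : V) (↑u4 : V) (↑u5 : V)
        ⟨
          hp.adj u2 (memP_of_adj_fst h1),
          hp.adj u3 (memP_of_adj_fst h2),
          aug_adj_inl h3,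
          hp.adj' u4 (memP_of_adj_snd h4),
          aug_anti_inl h5,
          aug_anti_inl h6,
          aug_anti_inl h7,
          aug_adj_inl h8,
          hp.anti' u5 (nmemP_of_anti_snd h9),
          aug_anti_inl h10⟩
    · exact hbf q (↑u2 : V) (↑u3 : V) (↑u4 : V) (↑u5 : V)
        ⟨
          hq.adj u2 (memQ_of_adj_fst h1),
          hq.adj u3 (memQ_of_adj_fst h2),
          aug_adj_inl h3,
          hq.adj' u4 (memQ_of_adj_snd h4),
          aug_anti_inl h5,
          aug_anti_inl h6,
          aug_anti_inl h7,
          aug_adj_inl h8,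
          hq.anti' u5 (nmemQ_of_anti_snd h9),
          aug_anti_inl h10⟩
  -- markers at positions [1, 5]
  · rcases fin_two i1 with rfl | rfl
    · rcases fin_two i5 with rfl | rfl
      · exact ne_of_anti_inr h9 rfl
      · rcases H with Hpart | ⟨⟨pa, qa, hpa, hqa, hrel⟩, ⟨pb, qb, hpb, hqb, hrel'⟩⟩
        · have mh1 := memP_of_adj_fst h1
          have mh2 := memP_of_adj_fst h2
          have mh4 := memP_of_adj_snd h4
          have mh7 := nmemQ_of_anti_snd h7
          have mh8 := memQ_of_adj_fst h8
          have mh10 := nmemQ_of_anti_fst h10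
          have hc2 := Hpart ↑u2 u2.2
          have hc3 := Hpart ↑u3 u3.2
          have hc4 := Hpart ↑u4 u4.2
          tauto
        · exact hbf pb (↑u2 : V) (↑u3 : V) (↑u4 : V) qb
            ⟨
              hpb.adj u2 (memP_of_adj_fst h1),
              hpb.adj u3 (memP_of_adj_fst h2),
              aug_adj_inl h3,
              hpb.adj' u4 (memP_of_adj_snd h4),
              aug_anti_inl h5,
              aug_anti_inl h6,
              hqb.anti' u4 (nmemQ_of_anti_snd h7),
              hqb.adj u2 (memQ_of_adj_fst h8),
              hrel'.symm,
              hqb.anti u3 (nmemQ_of_anti_fst h10)⟩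
    · rcases fin_two i5 with rfl | rfl
      · rcases H with Hpart | ⟨⟨pa, qa, hpa, hqa, hrel⟩, ⟨pb, qb, hpb, hqb, hrel'⟩⟩
        · have mh1 := memQ_of_adj_fst h1
          have mh2 := memQ_of_adj_fst h2
          have mh4 := memQ_of_adj_snd h4
          have mh7 := nmemP_of_anti_snd h7
          have mh8 := memP_of_adj_fst h8
          have mh10 := nmemP_of_anti_fst h10
          have hc2 := Hpart ↑u2 u2.2
          have hc3 := Hpart ↑u3 u3.2
          have hc4 := Hpart ↑u4 u4.2
          tauto
        · exact hbf qb (↑u2 : V) (↑u3 : V) (↑u4 : V) pb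
            ⟨
              hqb.adj u2 (memQ_of_adj_fst h1),
              hqb.adj u3 (memQ_of_adj_fst h2),
              aug_adj_inl h3,
              hqb.adj' u4 (memQ_of_adj_snd h4),
              aug_anti_inl h5,
              aug_anti_inl h6,
              hpb.anti' u4 (nmemP_of_anti_snd h7),
              hpb.adj u2 (memP_of_adj_fst h8),
              hrel',
              hpb.anti u3 (nmemP_of_anti_fst h10)⟩
      · exact ne_of_anti_inr h9 rfl
  -- markers at positions [1, 4]
  · rcases fin_two i1 with rfl | rfl
    · rcases fin_two i4 with rfl | rfl
      · exact ne_of_adj_inr h4 rfl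
      · rcases H with Hpart | ⟨⟨pa, qa, hpa, hqa, hrel⟩, ⟨pb, qb, hpb, hqb, hrel'⟩⟩
        · have mh1 := memP_of_adj_fst h1
          have mh2 := memP_of_adj_fst h2
          have mh5 := nmemQ_of_anti_fst h5
          have mh6 := nmemQ_of_anti_fst h6
          have mh7 := nmemQ_of_anti_fst h7
          have mh9 := nmemP_of_anti_snd h9
          have hc2 := Hpart ↑u2 u2.2
          have hc3 := Hpart ↑u3 u3.2
          have hc5 := Hpart ↑u5 u5.2
          tauto
        · exact hbf pa (↑u2 : V) (↑u3 : V) qa (↑u5 : V)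
            ⟨
              hpa.adj u2 (memP_of_adj_fst h1),
              hpa.adj u3 (memP_of_adj_fst h2),
              aug_adj_inl h3,
              hrel.symm,
              hqa.anti u2 (nmemQ_of_anti_fst h5),
              hqa.anti u3 (nmemQ_of_anti_fst h6),
              hqa.anti u5 (nmemQ_of_anti_fst h7),
              aug_adj_inl h8,
              hpa.anti' u5 (nmemP_of_anti_snd h9),
              aug_anti_inl h10⟩
    · rcases fin_two i4 with rfl | rfl
      · rcases H with Hpart | ⟨⟨pa, qa, hpa, hqa, hrel⟩, ⟨pb, qb, hpb, hqb, hrel'⟩⟩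
        · have mh1 := memQ_of_adj_fst h1
          have mh2 := memQ_of_adj_fst h2
          have mh5 := nmemP_of_anti_fst h5
          have mh6 := nmemP_of_anti_fst h6
          have mh7 := nmemP_of_anti_fst h7
          have mh9 := nmemQ_of_anti_snd h9
          have hc2 := Hpart ↑u2 u2.2
          have hc3 := Hpart ↑u3 u3.2
          have hc5 := Hpart ↑u5 u5.2
          tauto
        · exact hbf qa (↑u2 : V) (↑u3 : V) pa (↑u5 : V)
            ⟨
              hqa.adj u2 (memQ_of_adj_fst h1),
              hqa.adj u3 (memQ_of_adj_fst h2),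
              aug_adj_inl h3,
              hrel,
              hpa.anti u2 (nmemP_of_anti_fst h5),
              hpa.anti u3 (nmemP_of_anti_fst h6),
              hpa.anti u5 (nmemP_of_anti_fst h7),
              aug_adj_inl h8,
              hqa.anti' u5 (nmemQ_of_anti_snd h9),
              aug_anti_inl h10⟩
      · exact ne_of_adj_inr h4 rfl
  -- markers at positions [1, 4, 5]
  · exact fin2_pigeon ((ne_of_adj_inr h4).symm) ((ne_of_anti_inr h9).symm) (ne_of_anti_inr h7)
  -- markers at positions [1, 3]
  · rcases fin_two i1 with rfl | rfl
    · rcases fin_two i3 with rfl | rfl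
      · exact ne_of_adj_inr h2 rfl
      · rcases H with Hpart | ⟨⟨pa, qa, hpa, hqa, hrel⟩, ⟨pb, qb, hpb, hqb, hrel'⟩⟩
        · have mh1 := memP_of_adj_fst h1
          have mh3 := memQ_of_adj_snd h3
          have mh4 := memP_of_adj_snd h4
          have mh6 := nmemQ_of_anti_snd h6
          have mh9 := nmemP_of_anti_snd h9
          have mh10 := nmemQ_of_anti_snd h10
          have hc2 := Hpart ↑u2 u2.2
          have hc4 := Hpart ↑u4 u4.2
          have hc5 := Hpart ↑u5 u5.2
          tauto
        · exact hbf pa (↑u2 : V) qa (↑u4 : V) (↑u5 : V)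
            ⟨
              hpa.adj u2 (memP_of_adj_fst h1),
              hrel,
              hqa.adj' u2 (memQ_of_adj_snd h3),
              hpa.adj' u4 (memP_of_adj_snd h4),
              aug_anti_inl h5,
              hqa.anti' u4 (nmemQ_of_anti_snd h6),
              aug_anti_inl h7,
              aug_adj_inl h8,
              hpa.anti' u5 (nmemP_of_anti_snd h9),
              hqa.anti' u5 (nmemQ_of_anti_snd h10)⟩
    · rcases fin_two i3 with rfl | rfl
      · rcases H with Hpart | ⟨⟨pa, qa, hpa, hqa, hrel⟩, ⟨pb, qb, hpb, hqb, hrel'⟩⟩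
        · have mh1 := memQ_of_adj_fst h1
          have mh3 := memP_of_adj_snd h3
          have mh4 := memQ_of_adj_snd h4
          have mh6 := nmemP_of_anti_snd h6
          have mh9 := nmemQ_of_anti_snd h9
          have mh10 := nmemP_of_anti_snd h10
          have hc2 := Hpart ↑u2 u2.2
          have hc4 := Hpart ↑u4 u4.2
          have hc5 := Hpart ↑u5 u5.2
          tauto
        · exact hbf qa (↑u2 : V) pa (↑u4 : V) (↑u5 : V)
            ⟨
              hqa.adj u2 (memQ_of_adj_fst h1),
              hrel.symm,
              hpa.adj' u2 (memP_of_adj_snd h3),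
              hqa.adj' u4 (memQ_of_adj_snd h4),
              aug_anti_inl h5,
              hpa.anti' u4 (nmemP_of_anti_snd h6),
              aug_anti_inl h7,
              aug_adj_inl h8,
              hqa.anti' u5 (nmemQ_of_anti_snd h9),
              hpa.anti' u5 (nmemP_of_anti_snd h10)⟩
      · exact ne_of_adj_inr h2 rfl
  -- markers at positions [1, 3, 5]
  · exact fin2_pigeon (ne_of_adj_inr h2) ((ne_of_anti_inr h9).symm) ((ne_of_anti_inr h10).symm)
  -- markers at positions [1, 3, 4]
  · exact fin2_pigeon (ne_of_adj_inr h2) ((ne_of_adj_inr h4).symm) ((ne_of_anti_inr h6).symm)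
  -- markers at positions [1, 3, 4, 5]
  · exact fin2_pigeon (ne_of_adj_inr h2) ((ne_of_adj_inr h4).symm) ((ne_of_anti_inr h6).symm)
  -- markers at positions [1, 2]
  · rcases fin_two i1 with rfl | rfl
    · rcases fin_two i2 with rfl | rfl
      · exact ne_of_adj_inr h1 rfl
      · rcases H with Hpart | ⟨⟨pa, qa, hpa, hqa, hrel⟩, ⟨pb, qb, hpb, hqb, hrel'⟩⟩
        · have mh2 := memP_of_adj_fst h2
          have mh3 := memQ_of_adj_fst h3
          have mh4 := memP_of_adj_snd h4
          have mh5 := nmemQ_of_anti_snd h5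
          have mh8 := memQ_of_adj_snd h8
          have mh9 := nmemP_of_anti_snd h9
          have hc3 := Hpart ↑u3 u3.2
          have hc4 := Hpart ↑u4 u4.2
          have hc5 := Hpart ↑u5 u5.2
          tauto
        · exact hbf pa qa (↑u3 : V) (↑u4 : V) (↑u5 : V)
            ⟨
              hrel,
              hpa.adj u3 (memP_of_adj_fst h2),
              hqa.adj u3 (memQ_of_adj_fst h3),
              hpa.adj' u4 (memP_of_adj_snd h4),
              hqa.anti' u4 (nmemQ_of_anti_snd h5),
              aug_anti_inl h6,
              aug_anti_inl h7,
              hqa.adj' u5 (memQ_of_adj_snd h8),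
              hpa.anti' u5 (nmemP_of_anti_snd h9),
              aug_anti_inl h10⟩
    · rcases fin_two i2 with rfl | rfl
      · rcases H with Hpart | ⟨⟨pa, qa, hpa, hqa, hrel⟩, ⟨pb, qb, hpb, hqb, hrel'⟩⟩
        · have mh2 := memQ_of_adj_fst h2
          have mh3 := memP_of_adj_fst h3
          have mh4 := memQ_of_adj_snd h4
          have mh5 := nmemP_of_anti_snd h5
          have mh8 := memP_of_adj_snd h8
          have mh9 := nmemQ_of_anti_snd h9
          have hc3 := Hpart ↑u3 u3.2
          have hc4 := Hpart ↑u4 u4.2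
          have hc5 := Hpart ↑u5 u5.2
          tauto
        · exact hbf qa pa (↑u3 : V) (↑u4 : V) (↑u5 : V)
            ⟨
              hrel.symm,
              hqa.adj u3 (memQ_of_adj_fst h2),
              hpa.adj u3 (memP_of_adj_fst h3),
              hqa.adj' u4 (memQ_of_adj_snd h4),
              hpa.anti' u4 (nmemP_of_anti_snd h5),
              aug_anti_inl h6,
              aug_anti_inl h7,
              hpa.adj' u5 (memP_of_adj_snd h8),
              hqa.anti' u5 (nmemQ_of_anti_snd h9),
              aug_anti_inl h10⟩
      · exact ne_of_adj_inr h1 rfl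
  -- markers at positions [1, 2, 5]
  · exact fin2_pigeon (ne_of_adj_inr h1) ((ne_of_anti_inr h9).symm) ((ne_of_adj_inr h8).symm)
  -- markers at positions [1, 2, 4]
  · exact fin2_pigeon (ne_of_adj_inr h1) ((ne_of_adj_inr h4).symm) ((ne_of_anti_inr h5).symm)
  -- markers at positions [1, 2, 4, 5]
  · exact fin2_pigeon (ne_of_adj_inr h1) ((ne_of_adj_inr h4).symm) ((ne_of_anti_inr h5).symm)
  -- markers at positions [1, 2, 3]
  · exact fin2_pigeon (ne_of_adj_inr h1) (ne_of_adj_inr h2) (ne_of_adj_inr h3)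
  -- markers at positions [1, 2, 3, 5]
  · exact fin2_pigeon (ne_of_adj_inr h1) (ne_of_adj_inr h2) (ne_of_adj_inr h3)
  -- markers at positions [1, 2, 3, 4]
  · exact fin2_pigeon (ne_of_adj_inr h1) (ne_of_adj_inr h2) (ne_of_adj_inr h3)
  -- markers at positions [1, 2, 3, 4, 5]
  · exact fin2_pigeon (ne_of_adj_inr h1) (ne_of_adj_inr h2) (ne_of_adj_inr h3)

end Trigraph
namespace Trigraph

variable {V : Type*} {T : Trigraph V} {A B C D E F : Set V}

lemma mimicsA (hs : T.IsSplit A B C D E F) {a : V} (ha : a ∈ A) :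
    Mimics T (A ∪ B)ᶜ (C ∪ E) a := by
  obtain ⟨-, -, -, hCD, hCE, hCF, hDE, hDF, hEF, hunion, hACE, hADF, -, -, -, -, -, -⟩ := hs
  refine ⟨fun hc => hc (Or.inl ha), fun u => ⟨fun hu => (hACE a ha ↑u hu).2, fun hu => ?_⟩⟩
  have hmem : (u : V) ∈ C ∪ D ∪ E ∪ F := by rw [hunion]; exact u.2
  have : (u : V) ∈ D ∪ F := by
    simp only [Set.mem_union] at hmem hu ⊢; tauto
  exact (hADF a ha ↑u this).2

lemma mimicsB (hs : T.IsSplit A B C D E F) {b : V} (hb : b ∈ B) :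
    Mimics T (A ∪ B)ᶜ (D ∪ E) b := by
  obtain ⟨-, -, -, hCD, hCE, hCF, hDE, hDF, hEF, hunion, -, -, hBDE, hBCF, -, -, -, -⟩ := hs
  refine ⟨fun hc => hc (Or.inr hb), fun u => ⟨fun hu => (hBDE b hb ↑u hu).2, fun hu => ?_⟩⟩
  have hmem : (u : V) ∈ C ∪ D ∪ E ∪ F := by rw [hunion]; exact u.2
  have : (u : V) ∈ C ∪ F := by
    simp only [Set.mem_union] at hmem hu ⊢; tauto
  exact (hBCF b hb ↑u this).2

lemma mimicsC (hs : T.IsSplit A B C D E F) {c : V} (hc : c ∈ C) :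
    Mimics T (A ∪ B) A c := by
  obtain ⟨-, -, hAB, -, -, -, -, -, -, hunion, hACE, -, -, hBCF, -, -, -, -⟩ := hs
  have hcn : c ∈ (A ∪ B)ᶜ := by rw [← hunion]; exact Or.inl (Or.inl (Or.inl hc))
  refine ⟨hcn, fun u => ⟨fun hu => ?_, fun hu => ?_⟩⟩
  · exact (T.symm c ↑u).trans (hACE ↑u hu c (Or.inl hc)).2
  · have hub : (u : V) ∈ B := u.2.resolve_left hu
    exact (T.symm c ↑u).trans (hBCF ↑u hub c (Or.inl hc)).2

lemma mimicsD (hs : T.IsSplit A B C D E F) {d : V} (hd : d ∈ D) :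
    Mimics T (A ∪ B) B d := by
  obtain ⟨-, -, hAB, -, -, -, -, -, -, hunion, -, hADF, hBDE, -, -, -, -, -⟩ := hs
  have hdn : d ∈ (A ∪ B)ᶜ := by rw [← hunion]; exact Or.inl (Or.inl (Or.inr hd))
  refine ⟨hdn, fun u => ⟨fun hu => ?_, fun hu => ?_⟩⟩
  · exact (T.symm d ↑u).trans (hBDE ↑u hu d (Or.inl hd)).2
  · have hua : (u : V) ∈ A := by
      rcases u.2 with h | h
      · exact h
      · exact absurd h hu
    exact (T.symm d ↑u).trans (hADF ↑u hua d (Or.inl hd)).2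

lemma split_adj_pair (hs : T.IsSplit A B C D E F) :
    ∃ a b, a ∈ A ∧ b ∈ B ∧ T.Adj a b := by
  obtain ⟨-, -, hAB, -, -, -, -, -, -, -, -, -, -, -, -, hna, -, -⟩ := hs
  simp only [SAnticomplete, not_forall] at hna
  obtain ⟨a, ha, b, hb, hn⟩ := hna
  have hne : a ≠ b := fun e => (Set.disjoint_left.mp hAB ha) (e ▸ hb)
  refine ⟨a, b, ha, hb, hne, ?_⟩
  have := T.range a b hne
  have hθ : T.θ a b ≠ -1 := fun e => hn ⟨hne, e⟩
  tauto

lemma split_anti_pair (hs : T.IsSplit A B C D E F) :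
    ∃ a b, a ∈ A ∧ b ∈ B ∧ T.Anti a b := by
  obtain ⟨-, -, hAB, -, -, -, -, -, -, -, -, -, -, -, hnc, -, -, -⟩ := hs
  simp only [SComplete, not_forall] at hnc
  obtain ⟨a, ha, b, hb, hn⟩ := hnc
  have hne : a ≠ b := fun e => (Set.disjoint_left.mp hAB ha) (e ▸ hb)
  refine ⟨a, b, ha, hb, hne, ?_⟩
  have := T.range a b hne
  have hθ : T.θ a b ≠ 1 := fun e => hn ⟨hne, e⟩
  tauto

lemma blockYPair_bullFree (hbf : T.BullFree) (hs : T.IsSplit A B C D E F) :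
    (T.blockYPair A B C D E).BullFree := by
  obtain ⟨a1, b1, ha1, hb1, hadj⟩ := split_adj_pair hs
  obtain ⟨a2, b2, ha2, hb2, hanti⟩ := split_anti_pair hs
  exact augment2_bullFree hbf a1 b1 (mimicsA hs ha1) (mimicsB hs hb1)
    (Or.inr ⟨⟨a1, b1, mimicsA hs ha1, mimicsB hs hb1, hadj⟩,
             ⟨a2, b2, mimicsA hs ha2, mimicsB hs hb2, hanti⟩⟩)

lemma blockXPair_bullFree (hbf : T.BullFree) (hs : T.IsSplit A B C D E F)
    (hC : C.Nonempty) (hD : D.Nonempty) : (T.blockXPair A B).BullFree := by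
  obtain ⟨c, hc⟩ := hC
  obtain ⟨d, hd⟩ := hD
  have hAB := hs.2.2.1
  refine augment2_bullFree hbf c d (mimicsC hs hc) (mimicsD hs hd) (Or.inl fun u hu => ?_)
  constructor
  · intro huA huB
    exact (Set.disjoint_left.mp hAB huA) huB
  · intro huB
    rcases hu with h | h
    · exact h
    · exact absurd h huB

end Trigraph
open Trigraph in
/-- If `(X, Y)` is a decomposition of a bull-free monogamous trigraph `T`, then the
corresponding blocks `T_X` and `T_Y` are bull-free monogamous trigraphs.  The three kinds
of decompositions (homogeneous set, small homogeneous pair, proper homogeneous pair) are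
treated separately, together with the corresponding blocks. -/
theorem blocks_bullfree_monogamous {V : Type} [Fintype V] [DecidableEq V] (T : Trigraph V)
    (hbf : T.BullFree) (hmono : T.Monogamous) :
    (∀ X : Set V, T.HomSet X →
      (T.induce X).BullFree ∧ (T.induce X).Monogamous ∧
      ∀ x ∈ X, (T.induce (Xᶜ ∪ {x})).BullFree ∧ (T.induce (Xᶜ ∪ {x})).Monogamous) ∧
    (∀ A B C D E F : Set V, T.IsSplit A B C D E F → (A ∪ B).ncard ≤ 6 →
      (T.induce (A ∪ B)).BullFree ∧ (T.induce (A ∪ B)).Monogamous ∧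
      (T.blockYPair A B C D E).BullFree ∧ (T.blockYPair A B C D E).Monogamous) ∧
    (∀ A B C D E F : Set V, T.IsSplit A B C D E F → C.Nonempty → D.Nonempty →
      (T.blockXPair A B).BullFree ∧ (T.blockXPair A B).Monogamous ∧
      (T.blockYPair A B C D E).BullFree ∧ (T.blockYPair A B C D E).Monogamous) := by
  refine ⟨?_, ?_, ?_⟩
  · intro X _
    exact ⟨hbf.induce X, hmono.induce X,
      fun x _ => ⟨hbf.induce _, hmono.induce _⟩⟩
  · intro A B C D E F hs _
    exact ⟨hbf.induce _, hmono.induce _, blockYPair_bullFree hbf hs,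
      augment2_monogamous hmono⟩
  · intro A B C D E F hs hC hD
    exact ⟨blockXPair_bullFree hbf hs hC hD, augment2_monogamous hmono,
      blockYPair_bullFree hbf hs, augment2_monogamous hmono⟩
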